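/- arXiv:1307.1182 — 2 statements merged into one kernel-verified Lean document; each statement's English description precedes it below -/
import Mathlib

section
/- Let (X, d) be a compact metric space, let f : X → X be a homeomorphism satisfying the specification property, and let q ∈ X be a fixed point of f. Then for all ε_1 > 0, ε_2 > 0 and every x ∈ X, there exist a natural number L and a point w ∈ X such that d(x, w) ≤ ε_2 and d(f^{n}(f^{L}(w)), q) ≤ ε_1 for all n ≥ 0. In other words, the set ⋃_{L ≥ 0} f^{-L}({y ∈ X : d(f^{n}(y), q) ≤ ε_1 for all n ≥ 0}) is dense in X for every ε_1 > 0. -/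
open Filter Topology

/-- The specification property for a homeomorphism `f` of a metric space. -/
def SpecProp {X : Type*} [MetricSpace X] (f : X ≃ₜ X) : Prop :=
  ∀ ε : ℝ, 0 < ε → ∃ N : ℕ, 0 < N ∧
    ∀ (k : ℕ) (m n : ℕ → ℤ) (xs : ℕ → X),
      (∀ j < k, m j ≤ n j) →
      (∀ i < k, ∀ j < k, i ≠ j →
        ∀ a ∈ Set.Icc (m i) (n i), ∀ b ∈ Set.Icc (m j) (n j), (N : ℤ) ≤ |a - b|) →
      ∃ x : X, ∀ j < k, ∀ i ∈ Set.Icc (m j) (n j),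
        dist ((f.toEquiv ^ i) x) ((f.toEquiv ^ i) (xs j)) ≤ ε

lemma zpow_fixed {X : Type*} [MetricSpace X] (f : X ≃ₜ X) (q : X) (hq : f q = q) :
    ∀ i : ℤ, (f.toEquiv ^ i) q = q := by
  have h1 : f.toEquiv q = q := hq
  have hinv : (f.toEquiv)⁻¹ q = q := by
    show f.toEquiv.symm q = q
    rw [Equiv.symm_apply_eq, h1]
  intro i
  induction i using Int.induction_on with
  | zero => rfl
  | succ n ih =>
    rw [zpow_add_one, Equiv.Perm.mul_apply, h1, ih]
  | pred n ih =>
    rw [zpow_sub_one, Equiv.Perm.mul_apply, hinv, ih]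

lemma zpow_continuous {X : Type*} [MetricSpace X] (f : X ≃ₜ X) :
    ∀ i : ℤ, Continuous fun y : X => (f.toEquiv ^ i) y := by
  intro i
  induction i using Int.induction_on with
  | zero => simpa using continuous_id'
  | succ n ih =>
    have : (fun y : X => (f.toEquiv ^ ((n : ℤ) + 1)) y)
        = fun y : X => (f.toEquiv ^ (n : ℤ)) (f.toEquiv y) := by
      funext y; rw [zpow_add_one, Equiv.Perm.mul_apply]
    rw [this]
    exact ih.comp f.continuous
  | pred n ih =>
    have : (fun y : X => (f.toEquiv ^ (-(n : ℤ) - 1)) y)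
        = fun y : X => (f.toEquiv ^ (-(n : ℤ))) (f.symm y) := by
      funext y; rw [zpow_sub_one, Equiv.Perm.mul_apply]; rfl
    rw [this]
    exact ih.comp f.symm.continuous

/-- if a homeomorphism of a compact metric space satisfies the specification
property and `q` is a fixed point, then the union over `L ≥ 0` of the `f^{-L}`-images of the
local stable set of `q` of size `ε₁` is dense: every point `x` is `ε₂`-approximated by
some such `w`. -/
theorem dense_stable_set_of_fixedPoint {X : Type*} [MetricSpace X] [CompactSpace X]
    (f : X ≃ₜ X) (hf : SpecProp f) (q : X) (hq : f q = q) :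
    ∀ ε₁ ε₂ : ℝ, 0 < ε₁ → 0 < ε₂ → ∀ x : X,
      ∃ (L : ℕ) (w : X), dist x w ≤ ε₂ ∧
        ∀ n : ℕ, dist ((f.toEquiv ^ (n : ℤ)) ((f.toEquiv ^ (L : ℤ)) w)) q ≤ ε₁ := by
  intro ε₁ ε₂ hε₁ hε₂ x
  set e := f.toEquiv with he
  have hfix := zpow_fixed f q hq
  have hcont := zpow_continuous f
  have hεpos : 0 < min ε₁ ε₂ := lt_min hε₁ hε₂
  obtain ⟨N, hNpos, hspec⟩ := hf _ hεpos
  -- For each T, get a point shadowing x at time 0 and q on [N, N+T]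
  have key : ∀ T : ℕ, ∃ u : X, dist u x ≤ min ε₁ ε₂ ∧
      ∀ i : ℤ, (N : ℤ) ≤ i → i ≤ (N : ℤ) + T → dist ((e ^ i) u) q ≤ min ε₁ ε₂ := by
    intro T
    have hmn : ∀ j < 2, (fun j => if j = 0 then (0 : ℤ) else (N : ℤ)) j ≤
        (fun j => if j = 0 then (0 : ℤ) else (N : ℤ) + T) j := by
      intro j hj
      by_cases h : j = 0
      · simp [h]
      · simp only [h, if_false]
        omega
    have hsep : ∀ i < 2, ∀ j < 2, i ≠ j →
        ∀ a ∈ Set.Icc ((fun j => if j = 0 then (0 : ℤ) else (N : ℤ)) i)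
          ((fun j => if j = 0 then (0 : ℤ) else (N : ℤ) + T) i),
        ∀ b ∈ Set.Icc ((fun j => if j = 0 then (0 : ℤ) else (N : ℤ)) j)
          ((fun j => if j = 0 then (0 : ℤ) else (N : ℤ) + T) j), (N : ℤ) ≤ |a - b| := by
      intro i hi j hj hij a ha b hb
      refine le_abs.mpr ?_
      simp only [Set.mem_Icc] at ha hb
      interval_cases i <;> interval_cases j <;>
        first
          | exact absurd rfl hij
          | (norm_num at ha hb; omega)
    obtain ⟨u, hu⟩ := hspec 2 (fun j => if j = 0 then 0 else (N : ℤ))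
      (fun j => if j = 0 then 0 else (N : ℤ) + T)
      (fun j => if j = 0 then x else q) hmn hsep
    refine ⟨u, ?_, ?_⟩
    · have := hu 0 (by norm_num) 0 (by simp)
      simpa using this
    · intro i hi1 hi2
      have := hu 1 (by norm_num) i (by simp [Set.mem_Icc, hi1, hi2])
      simpa [hfix i] using this
  choose u hu1 hu2 using key
  obtain ⟨w, -, φ, hφ, hlim⟩ := isCompact_univ.tendsto_subseq (fun T => Set.mem_univ (u T))
  refine ⟨N, w, ?_, ?_⟩
  · have h1 : Tendsto (fun j => dist x (u (φ j))) atTop (𝓝 (dist x w)) :=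
      tendsto_const_nhds.dist hlim
    refine le_trans (le_of_tendsto h1 (Eventually.of_forall fun j => ?_)) (by rfl)
    calc dist x (u (φ j)) = dist (u (φ j)) x := dist_comm _ _
      _ ≤ min ε₁ ε₂ := hu1 (φ j)
      _ ≤ ε₂ := min_le_right _ _
  · intro n
    have heq : (e ^ (n : ℤ)) ((e ^ (N : ℤ)) w) = (e ^ ((n : ℤ) + N)) w := by
      rw [zpow_add, Equiv.Perm.mul_apply]
    rw [heq]
    have h2 : Tendsto (fun j => dist ((e ^ ((n : ℤ) + N)) (u (φ j))) q) atTop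
        (𝓝 (dist ((e ^ ((n : ℤ) + N)) w) q)) :=
      (((hcont _).tendsto w).comp hlim).dist tendsto_const_nhds
    have h3 : ∀ᶠ j in atTop, dist ((e ^ ((n : ℤ) + N)) (u (φ j))) q ≤ min ε₁ ε₂ := by
      filter_upwards [eventually_ge_atTop n] with j hj
      have hjn : (n : ℤ) ≤ φ j := by
        exact_mod_cast Int.ofNat_le.mpr (le_trans hj (hφ.le_apply))
      exact hu2 (φ j) ((n : ℤ) + N) (by omega) (by omega)
    exact le_trans (le_of_tendsto h2 h3) (min_le_left _ _)
end

section
/- Let (X, d) be a compact metric space and let f : X → X be a homeomorphism satisfying the specification property. Let p, q ∈ X be fixed points of f such that: (i) there exists ε_1 > 0 so that every y with d(f^{-n}(y), p) ≤ ε_1 for all n ≥ 0 satisfies d(f^{-n}(y), p) → 0 as n → ∞; and (ii) there exists ε_2 > 0 so that every y with d(f^{n}(y), q) ≤ ε_2 for all n ≥ 0 satisfies d(f^{n}(y), q) → 0 as n → ∞. Then the unstable set of p meets the stable set of q: there exists z ∈ X with d(f^{-n}(z), p) → 0 and d(f^{n}(z), q) → 0 as n → ∞. -/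
open Filter Topology

lemma fixed_zpow {X : Type*} [MetricSpace X] (f : X ≃ₜ X) (p : X) (hp : f p = p) :
    ∀ i : ℤ, (f.toEquiv ^ i) p = p := by
  have hinv : f.toEquiv⁻¹ p = p := by
    have := congrArg f.toEquiv.symm hp
    simpa using this.symm
  intro i
  induction i using Int.induction_on with
  | zero => simp
  | succ n ih =>
    rw [zpow_add_one, Equiv.Perm.mul_apply]
    simpa [hp] using ih
  | pred n ih =>
    rw [zpow_sub_one, Equiv.Perm.mul_apply, hinv]
    exact ih

lemma cont_zpow {X : Type*} [MetricSpace X] (f : X ≃ₜ X) (i : ℤ) :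
    Continuous fun x => (f.toEquiv ^ i) x := by
  induction i using Int.induction_on with
  | zero => simpa using continuous_id'
  | succ n ih =>
    have h : ∀ x, (f.toEquiv ^ ((n : ℤ) + 1)) x = (f.toEquiv ^ (n : ℤ)) (f x) := by
      intro x; rw [zpow_add_one, Equiv.Perm.mul_apply]; rfl
    exact (ih.comp f.continuous).congr fun x => (h x).symm
  | pred n ih =>
    have h : ∀ x, (f.toEquiv ^ (-(n : ℤ) - 1)) x = (f.toEquiv ^ (-(n : ℤ))) (f.symm x) := by
      intro x; rw [zpow_sub_one, Equiv.Perm.mul_apply]; rfl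
    exact (ih.comp f.symm.continuous).congr fun x => (h x).symm

lemma zpow_apply_add' {X : Type*} [MetricSpace X] (f : X ≃ₜ X) (a b : ℤ) (x : X) :
    (f.toEquiv ^ a) ((f.toEquiv ^ b) x) = (f.toEquiv ^ (a + b)) x := by
  rw [zpow_add, Equiv.Perm.mul_apply]

/-- if `f` satisfies the specification property, `p` and `q` are fixed points
whose local unstable (resp. stable) sets are contained in their unstable (resp. stable) sets,
then the unstable set of `p` meets the stable set of `q`. -/
theorem unstable_meets_stable {X : Type*} [MetricSpace X] [CompactSpace X]
    (f : X ≃ₜ X) (hf : SpecProp f) (p q : X) (hp : f p = p) (hq : f q = q)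
    (hlocu : ∃ ε₁ : ℝ, 0 < ε₁ ∧ ∀ y : X,
      (∀ n : ℕ, dist ((f.toEquiv ^ (-(n : ℤ))) y) p ≤ ε₁) →
      Tendsto (fun n : ℕ => dist ((f.toEquiv ^ (-(n : ℤ))) y) p) atTop (nhds 0))
    (hlocs : ∃ ε₂ : ℝ, 0 < ε₂ ∧ ∀ y : X,
      (∀ n : ℕ, dist ((f.toEquiv ^ (n : ℤ)) y) q ≤ ε₂) →
      Tendsto (fun n : ℕ => dist ((f.toEquiv ^ (n : ℤ)) y) q) atTop (nhds 0)) :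
    ∃ z : X,
      Tendsto (fun n : ℕ => dist ((f.toEquiv ^ (-(n : ℤ))) z) p) atTop (nhds 0) ∧
      Tendsto (fun n : ℕ => dist ((f.toEquiv ^ (n : ℤ)) z) q) atTop (nhds 0) := by
  obtain ⟨ε₁, hε₁, h₁⟩ := hlocu
  obtain ⟨ε₂, hε₂, h₂⟩ := hlocs
  set ε : ℝ := min ε₁ ε₂ with hε
  have hεpos : 0 < ε := lt_min hε₁ hε₂
  obtain ⟨N, hNpos, hspec⟩ := hf ε hεpos
  -- for each M, get a shadowing point
  have key : ∀ M : ℕ, ∃ x : X,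
      (∀ i : ℤ, i ∈ Set.Icc (-(M : ℤ)) 0 → dist ((f.toEquiv ^ i) x) p ≤ ε) ∧
      (∀ i : ℤ, i ∈ Set.Icc (N : ℤ) ((N : ℤ) + M) → dist ((f.toEquiv ^ i) x) q ≤ ε) := by
    intro M
    obtain ⟨x, hx⟩ := hspec 2 (fun j => if j = 0 then -(M : ℤ) else N)
      (fun j => if j = 0 then 0 else (N : ℤ) + M)
      (fun j => if j = 0 then p else q)
      (by
        intro j hj
        interval_cases j <;> simp)
      (by
        intro i hi j hj hij a ha b hb
        interval_cases i <;> interval_cases j <;>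
          simp only [Set.mem_Icc, if_true, if_false, reduceIte] at ha hb <;>
          [exact absurd rfl hij; skip; skip; exact absurd rfl hij] <;>
          obtain ⟨ha1, ha2⟩ := ha <;> obtain ⟨hb1, hb2⟩ := hb <;>
          rcases abs_cases (a - b) with h | h <;> rw [h.1] <;> omega)
    refine ⟨x, ?_, ?_⟩
    · intro i hi
      have := hx 0 (by norm_num) i (by simpa using hi)
      simpa [fixed_zpow f p hp] using this
    · intro i hi
      have := hx 1 (by norm_num) i (by simpa using hi)
      simpa [fixed_zpow f q hq] using this
  choose x hx1 hx2 using key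
  -- take a convergent subsequence
  obtain ⟨z, -, φ, hφ, hz⟩ := isCompact_univ.tendsto_subseq (fun M => Set.mem_univ (x M))
  have hφge : ∀ k, k ≤ φ k := fun k => hφ.le_apply
  -- backward orbit of z stays near p
  have hA : ∀ i : ℤ, i ≤ 0 → dist ((f.toEquiv ^ i) z) p ≤ ε := by
    intro i hi
    have hcont : Tendsto (fun k => dist ((f.toEquiv ^ i) (x (φ k))) p) atTop
        (𝓝 (dist ((f.toEquiv ^ i) z) p)) :=
      (((cont_zpow f i).tendsto z).comp hz).dist tendsto_const_nhds
    refine le_of_tendsto hcont ?_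
    filter_upwards [eventually_ge_atTop i.natAbs] with k hk
    refine hx1 (φ k) i ⟨?_, hi⟩
    have : i.natAbs ≤ φ k := hk.trans (hφge k)
    omega
  -- forward orbit of z, from time N on, stays near q
  have hB : ∀ i : ℤ, (N : ℤ) ≤ i → dist ((f.toEquiv ^ i) z) q ≤ ε := by
    intro i hi
    have hcont : Tendsto (fun k => dist ((f.toEquiv ^ i) (x (φ k))) q) atTop
        (𝓝 (dist ((f.toEquiv ^ i) z) q)) :=
      (((cont_zpow f i).tendsto z).comp hz).dist tendsto_const_nhds
    refine le_of_tendsto hcont ?_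
    filter_upwards [eventually_ge_atTop i.natAbs] with k hk
    refine hx2 (φ k) i ⟨hi, ?_⟩
    have : i.natAbs ≤ φ k := hk.trans (hφge k)
    omega
  refine ⟨z, ?_, ?_⟩
  · exact h₁ z fun n => le_trans (hA (-(n : ℤ)) (by omega)) (min_le_left _ _)
  · -- apply h₂ to w = f^N z
    set w : X := (f.toEquiv ^ (N : ℤ)) z with hw
    have hwq : ∀ n : ℕ, dist ((f.toEquiv ^ (n : ℤ)) w) q ≤ ε₂ := by
      intro n
      rw [hw, zpow_apply_add']
      exact le_trans (hB ((n : ℤ) + N) (by omega)) (min_le_right _ _)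
    have hwt := h₂ w hwq
    have hshift : Tendsto (fun n : ℕ => dist ((f.toEquiv ^ ((n - N : ℕ) : ℤ)) w) q)
        atTop (𝓝 0) := hwt.comp (tendsto_sub_atTop_nat N)
    refine hshift.congr' ?_
    filter_upwards [eventually_ge_atTop N] with n hn
    have hnn : ((n - N : ℕ) : ℤ) + (N : ℤ) = (n : ℤ) := by omega
    rw [hw, zpow_apply_add', hnn]
end
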